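/- The number of NE lattice paths of length 2m (from a fixed starting point, with steps N = (0,1) and E = (1,0)) that end with an N-step and have exactly i maximal N-runs not counting the final N-run equals C(2m, 2i+1). -/

import Mathlib

/-- The number of maximal N-runs of an NE-path, encoded as a list of booleans
(`true` = N-step, `false` = E-step): a run starts at the head if it is an N-step,
or at any N-step immediately preceded by an E-step. -/
def nRuns (l : List Bool) : ℕ :=
  (if l.head? = some true then 1 else 0) + (l.zip l.tail).count (false, true)

def cnt (n : ℕ) (p : List Bool → Bool) : ℕ :=
  (Finset.univ.filter fun f : Fin n → Bool => p (List.ofFn f) = true).card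

lemma cnt_congr {n : ℕ} {p q : List Bool → Bool} (h : ∀ l, l.length = n → p l = q l) :
    cnt n p = cnt n q := by
  unfold cnt
  congr 1
  apply Finset.filter_congr
  intro f _
  rw [h (List.ofFn f) (by simp)]

lemma cnt_false (n : ℕ) : cnt n (fun _ => false) = 0 := by simp [cnt]

lemma cnt_zero (p : List Bool → Bool) : cnt 0 p = if p [] = true then 1 else 0 := by
  unfold cnt
  have e : ∀ f : Fin 0 → Bool, List.ofFn f = [] := fun f => by simp
  rcases h : p [] with _ | _
  · rw [Finset.filter_false_of_mem (fun f _ => by simp [e f, h])]; simp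
  · rw [Finset.filter_true_of_mem (fun f _ => by simp [e f, h])]; simp

lemma cnt_succ (n : ℕ) (p : List Bool → Bool) :
    cnt (n+1) p = cnt n (fun l => p (true :: l)) + cnt n (fun l => p (false :: l)) := by
  have ofn : ∀ f : Fin (n+1) → Bool, List.ofFn f = f 0 :: List.ofFn (fun i => f i.succ) :=
    fun f => List.ofFn_succ
  have key : cnt (n+1) p =
      (Finset.univ.filter fun q : Bool × (Fin n → Bool) => p (q.1 :: List.ofFn q.2) = true).card := by
    unfold cnt
    apply Finset.card_bij' (fun f _ => ((f 0, fun i => f i.succ) : Bool × (Fin n → Bool)))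
      (fun q _ => Fin.cons q.1 q.2)
    · intro f _
      funext i
      refine Fin.cases ?_ ?_ i <;> simp
    · intro q _
      simp
    · intro f hf
      simp only [Finset.mem_filter, Finset.mem_univ, true_and] at hf ⊢
      rwa [ofn f] at hf
    · intro q hq
      simp only [Finset.mem_filter, Finset.mem_univ, true_and] at hq ⊢
      rw [show List.ofFn (Fin.cons q.1 q.2) = q.1 :: List.ofFn q.2 by
        rw [ofn]; simp]
      exact hq
  rw [key, Finset.card_filter, Fintype.sum_prod_type, Fintype.sum_bool]
  unfold cnt
  rw [Finset.card_filter, Finset.card_filter]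

lemma cnt_or {n : ℕ} {p q : List Bool → Bool} (h : ∀ l, ¬(p l = true ∧ q l = true)) :
    cnt n (fun l => p l || q l) = cnt n p + cnt n q := by
  unfold cnt
  rw [Finset.filter_congr (q := fun f : Fin n → Bool =>
      p (List.ofFn f) = true ∨ q (List.ofFn f) = true)
      (fun f _ => by simp [Bool.or_eq_true])]
  rw [Finset.filter_or]
  apply Finset.card_union_of_disjoint
  rw [Finset.disjoint_filter]
  intro f _ hp hq
  exact h (List.ofFn f) ⟨hp, hq⟩

def P (h : Bool) (r : ℕ) (l : List Bool) : Bool :=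
  decide (l.getLast? = some true ∧ l.head? = some h ∧ nRuns l = r)

lemma nRuns_true_cons (c : Bool) (t : List Bool) :
    nRuns (true :: c :: t) = (if c then 0 else 1) + nRuns (c :: t) := by
  cases c <;> simp [nRuns, List.count_cons] <;> omega

lemma nRuns_false_cons (c : Bool) (t : List Bool) :
    nRuns (false :: c :: t) = nRuns (c :: t) := by
  cases c <;> simp [nRuns, List.count_cons] <;> omega

lemma nRuns_true_ne_zero (l : List Bool) : nRuns (true :: l) ≠ 0 := by
  simp [nRuns]

lemma head_mismatch (h b : Bool) (r : ℕ) (hb : b ≠ h) (l : List Bool) :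
    P h r (b :: l) = false := by
  simp [P]
  intro _ h2
  exact absurd h2 hb

lemma P_disj (r s : ℕ) : ∀ l : List Bool, ¬(P true r l = true ∧ P false s l = true) := by
  rintro l ⟨h1, h2⟩
  simp [P] at h1 h2
  rw [h1.2.1] at h2
  simp at h2

lemma main_lemma (n : ℕ) :
    (∀ r, cnt (n+1) (P true (r+1)) = n.choose (2*r)) ∧
    (∀ r, cnt (n+1) (P false (r+1)) = n.choose (2*r+1)) ∧
    cnt (n+1) (P true 0) = 0 ∧ cnt (n+1) (P false 0) = 0 := by
  induction n with
  | zero =>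
    refine ⟨fun r => ?_, fun r => ?_, ?_, ?_⟩ <;>
      rw [cnt_succ, cnt_zero, cnt_zero]
    · rcases r with _ | s
      · simp [P, nRuns]
      · simp [P, nRuns, Nat.choose_eq_zero_of_lt (by omega : 0 < 2*(s+1))]
    · simp [P, nRuns, Nat.choose_eq_zero_of_lt (by omega : 0 < 2*r+1)]
    · simp [P, nRuns]
    · simp [P, nRuns]
  | succ n ih =>
    obtain ⟨ihT, ihF, ihT0, ihF0⟩ := ih
    have hTT : ∀ r, cnt (n+1) (fun l => P true (r+1) (true :: l)) =
        cnt (n+1) (fun l => P true (r+1) l || P false r l) := by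
      intro r
      apply cnt_congr
      intro l hl
      rcases l with _ | ⟨c, t⟩
      · simp at hl
      · simp only [P, nRuns_true_cons, List.getLast?_cons_cons, ← Bool.decide_or]
        rw [decide_eq_decide]
        cases c <;> simp
        intro _
        omega
    have hFF : ∀ r, cnt (n+1) (fun l => P false r (false :: l)) =
        cnt (n+1) (fun l => P true r l || P false r l) := by
      intro r
      apply cnt_congr
      intro l hl
      rcases l with _ | ⟨c, t⟩
      · simp at hl
      · simp only [P, nRuns_false_cons, List.getLast?_cons_cons, ← Bool.decide_or]
        rw [decide_eq_decide]
        cases c <;> simp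
    have hmisF : ∀ r, cnt (n+1) (fun l => P true r (false :: l)) = 0 := by
      intro r
      rw [cnt_congr (q := fun _ => false) (fun l _ => head_mismatch _ _ _ (by simp) l)]
      exact cnt_false _
    have hmisT : ∀ r, cnt (n+1) (fun l => P false r (true :: l)) = 0 := by
      intro r
      rw [cnt_congr (q := fun _ => false) (fun l _ => head_mismatch _ _ _ (by simp) l)]
      exact cnt_false _
    have hdisj := P_disj
    refine ⟨fun r => ?_, fun r => ?_, ?_, ?_⟩
    · rw [cnt_succ, hmisF, hTT, cnt_or (hdisj _ _), ihT r]
      rcases r with _ | s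
      · simp [ihF0]
      · rw [ihF s]
        rw [show 2*(s+1) = (2*s+1) + 1 by ring, Nat.choose_succ_succ']
        omega
    · rw [cnt_succ, hmisT, hFF, cnt_or (hdisj _ _), ihT r, ihF r]
      rw [show 2*r+1 = (2*r) + 1 by ring, Nat.choose_succ_succ']
      omega
    · rw [cnt_succ, hmisF]
      rw [cnt_congr (q := fun _ => false) (fun l _ => ?_), cnt_false]
      simp [P, nRuns_true_ne_zero]
    · rw [cnt_succ, hmisT, hFF, cnt_or (hdisj _ _), ihT0, ihF0]


/-- The number of NE lattice paths of length 2m that end with an N-step and have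
exactly i maximal N-runs not counting the final N-run equals C(2m, 2i+1). -/
theorem ne_paths_ending_N (m i : ℕ) :
    (Finset.univ.filter (fun f : Fin (2 * m) → Bool =>
        (List.ofFn f).getLast? = some true ∧ nRuns (List.ofFn f) = i + 1)).card
      = (2 * m).choose (2 * i + 1) := by
  rcases m with _ | m
  · rw [Finset.filter_false_of_mem, Finset.card_empty]
    · symm
      apply Nat.choose_eq_zero_of_lt
      omega
    · intro f _
      have h0 : List.ofFn f = [] := by simp
      simp [h0]
  · have hc : (Finset.univ.filter (fun f : Fin (2 * (m+1)) → Bool =>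
        (List.ofFn f).getLast? = some true ∧ nRuns (List.ofFn f) = i + 1)).card
        = cnt (2*(m+1)) (fun l => P true (i+1) l || P false (i+1) l) := by
      unfold cnt
      congr 1
      apply Finset.filter_congr
      intro f _
      have hlen : (List.ofFn f).length = 2*(m+1) := by
        rw [List.length_ofFn]
      rcases hl : List.ofFn f with _ | ⟨c, t⟩
      · rw [hl] at hlen; simp at hlen
      · simp only [P, Bool.or_eq_true, decide_eq_true_eq]
        cases c <;> simp <;> tauto
    rw [hc]
    have h2 : 2 * (m+1) = (2*m+1) + 1 := by ring
    rw [h2, cnt_or (P_disj _ _), (main_lemma (2*m+1)).1 i, (main_lemma (2*m+1)).2.1 i]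
    exact (Nat.choose_succ_succ' (2*m+1) (2*i)).symm
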